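/- arXiv:1602.06131 — 4 statements merged into one kernel-verified Lean document; each statement's English description precedes it below -/
import Mathlib

section
/- For every H ∈ T⊥ one has ∑_{i=1}^{n} R₂(Xᵢ, H)Xᵢ = 3J(lH) = 3 j(lH) + 3 k(lH), where lH is the orthogonal projection of JH onto T, j(lH) is the orthogonal projection of J(lH) onto T, and k(lH) is the orthogonal projection of J(lH) onto T⊥. -/
open RealInnerProductSpace

theorem stmt_6
    {V : Type*} [NormedAddCommGroup V] [InnerProductSpace ℝ V] [FiniteDimensional ℝ V]
    (J : V →ₗ[ℝ] V)
    (hJ2 : ∀ X : V, J (J X) = -X)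
    (hJskew : ∀ X Y : V, ⟪J X, Y⟫ = -⟪X, J Y⟫)
    (T : Submodule ℝ V)
    (j k l m : V → V)
    (hj : ∀ X : V, j X = (T.orthogonalProjectionOnto (J X) : V))
    (hk : ∀ X : V, k X = (Tᗮ.orthogonalProjectionOnto (J X) : V))
    (hl : ∀ ξ : V, l ξ = (T.orthogonalProjectionOnto (J ξ) : V))
    (hm : ∀ ξ : V, m ξ = (Tᗮ.orthogonalProjectionOnto (J ξ) : V))
    (n : ℕ) (X : Fin n → V)
    (hX : Orthonormal ℝ X)
    (hspan : Submodule.span ℝ (Set.range X) = T)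
    (R₂ : V → V → V → V)
    (hR₂ : ∀ A B C : V, R₂ A B C = ⟪J B, C⟫ • J A - ⟪J A, C⟫ • J B + (2 * ⟪J B, A⟫) • J C)
    : ∀ H ∈ Tᗮ,
      (∑ i, R₂ (X i) H (X i)) = (3 : ℝ) • J (l H) ∧
      (∑ i, R₂ (X i) H (X i)) = (3 : ℝ) • j (l H) + (3 : ℝ) • k (l H) := by
  intro H _hH
  -- X as vectors in T
  have hmemT : ∀ i, X i ∈ T := fun i => by
    rw [← hspan]; exact Submodule.subset_span (Set.mem_range_self i)
  set X' : Fin n → T := fun i => ⟨X i, hmemT i⟩ with hX'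
  have hon : Orthonormal ℝ X' := by
    rw [orthonormal_iff_ite] at hX ⊢
    intro i₁ i₂
    simpa [Submodule.coe_inner] using hX i₁ i₂
  have hsp : ⊤ ≤ Submodule.span ℝ (Set.range X') := by
    have hmap : Submodule.map T.subtype (Submodule.span ℝ (Set.range X'))
        = Submodule.map T.subtype ⊤ := by
      have himg : ⇑T.subtype '' Set.range X' = Set.range X := by
        ext v
        constructor
        · rintro ⟨w, ⟨i, rfl⟩, rfl⟩; exact ⟨i, rfl⟩
        · rintro ⟨i, rfl⟩; exact ⟨X' i, ⟨i, rfl⟩, rfl⟩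
      rw [Submodule.map_span, himg, hspan, Submodule.map_top, Submodule.range_subtype]
    exact le_of_eq (Submodule.map_injective_of_injective T.injective_subtype hmap).symm
  let B : OrthonormalBasis (Fin n) ℝ T := OrthonormalBasis.mk hon hsp
  have hB : ∀ i, (B i : V) = X i := fun i => by
    rw [show B i = X' i from congrFun (OrthonormalBasis.coe_mk hon hsp) i]
  have hproj : ∀ x : V, (T.orthogonalProjectionOnto x : V) = ∑ i, ⟪X i, x⟫ • X i := by
    intro x
    have := B.orthogonalProjectionOnto_apply_eq_sum x
    calc (T.orthogonalProjectionOnto x : V) = ((∑ i, ⟪(B i : V), x⟫ • B i : T) : V) := by rw [this]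
      _ = ∑ i, ⟪X i, x⟫ • X i := by
          push_cast
          exact Finset.sum_congr rfl fun i _ => by rw [hB]
  have hlH : l H = ∑ i, ⟪X i, J H⟫ • X i := by rw [hl, hproj]
  -- self inner with J vanishes
  have hself : ∀ Y : V, ⟪J Y, Y⟫ = 0 := by
    intro Y
    have h1 := hJskew Y Y
    have h2 : ⟪Y, J Y⟫ = ⟪J Y, Y⟫ := real_inner_comm _ _
    linarith [h1, h2 ▸ h1]
  have key : (∑ i, R₂ (X i) H (X i)) = (3 : ℝ) • J (l H) := by
    have : ∀ i, R₂ (X i) H (X i) = (3 * ⟪X i, J H⟫) • J (X i) := by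
      intro i
      rw [hR₂, hself, zero_smul, sub_zero, real_inner_comm (J H) (X i)]
      rw [← add_smul]; ring_nf
    rw [Finset.sum_congr rfl fun i _ => this i, hlH, map_sum, Finset.smul_sum]
    refine Finset.sum_congr rfl fun i _ => ?_
    rw [map_smul, smul_smul]
  refine ⟨key, ?_⟩
  rw [key, hj, hk, ← smul_add]
  congr 1
  exact (T.starProjection_add_starProjection_orthogonal (J (l H))).symm
end

section
/- Let α, β ∈ ℝ and define R = αR₁ + βR₂. Then for every H ∈ T⊥ one has ∑_{i=1}^{n} R(Xᵢ, H)Xᵢ = -nαH + 3β(j(lH) + k(lH)); in particular the component of this sum in T equals 3β j(lH) and the component in T⊥ equals -nαH + 3β k(lH). -/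
open RealInnerProductSpace

theorem stmt_7
    {V : Type*} [NormedAddCommGroup V] [InnerProductSpace ℝ V] [FiniteDimensional ℝ V]
    (J : V →ₗ[ℝ] V)
    (hJ2 : ∀ X : V, J (J X) = -X)
    (hJskew : ∀ X Y : V, ⟪J X, Y⟫ = -⟪X, J Y⟫)
    (T : Submodule ℝ V)
    (j k l m : V → V)
    (hj : ∀ X : V, j X = (Submodule.orthogonalProjectionOnto T (J X) : V))
    (hk : ∀ X : V, k X = (Submodule.orthogonalProjectionOnto Tᗮ (J X) : V))
    (hl : ∀ ξ : V, l ξ = (Submodule.orthogonalProjectionOnto T (J ξ) : V))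
    (hm : ∀ ξ : V, m ξ = (Submodule.orthogonalProjectionOnto Tᗮ (J ξ) : V))
    (n : ℕ) (X : Fin n → V)
    (hX : Orthonormal ℝ X)
    (hspan : Submodule.span ℝ (Set.range X) = T)
    (R₁ : V → V → V → V)
    (hR₁ : ∀ A B C : V, R₁ A B C = ⟪B, C⟫ • A - ⟪A, C⟫ • B)
    (R₂ : V → V → V → V)
    (hR₂ : ∀ A B C : V, R₂ A B C = ⟪J B, C⟫ • J A - ⟪J A, C⟫ • J B + (2 * ⟪J B, A⟫) • J C)
    (α β : ℝ) (R : V → V → V → V)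
    (hR : ∀ A B C : V, R A B C = α • R₁ A B C + β • R₂ A B C)
    : ∀ H ∈ Tᗮ,
      (∑ i, R (X i) H (X i)) = (-(n : ℝ) * α) • H + (3 * β) • (j (l H) + k (l H)) ∧
      (Submodule.orthogonalProjectionOnto T (∑ i, R (X i) H (X i)) : V) = (3 * β) • j (l H) ∧
      (Submodule.orthogonalProjectionOnto Tᗮ (∑ i, R (X i) H (X i)) : V)
        = (-(n : ℝ) * α) • H + (3 * β) • k (l H) := by
  intro H hH
  have hXT : ∀ i, X i ∈ T := fun i => hspan ▸ Submodule.subset_span ⟨i, rfl⟩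
  set X' : Fin n → T := fun i => ⟨X i, hXT i⟩ with hX'def
  have hX' : Orthonormal ℝ X' := by
    rw [orthonormal_iff_ite] at hX ⊢
    intro i i'
    simpa [X', Submodule.coe_inner] using hX i i'
  have hspan' : ⊤ ≤ Submodule.span ℝ (Set.range X') := by
    have hmap : Submodule.map T.subtype (Submodule.span ℝ (Set.range X'))
        = Submodule.map T.subtype ⊤ := by
      rw [Submodule.map_span, Submodule.map_top, Submodule.range_subtype]
      rw [← Set.range_comp]
      have : (T.subtype ∘ X') = X := rfl
      rw [this, hspan]
    exact (Submodule.map_injective_of_injective T.injective_subtype hmap).ge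
  let b : OrthonormalBasis (Fin n) ℝ T := OrthonormalBasis.mk hX' hspan'
  have hproj : ∀ v : V, (Submodule.orthogonalProjectionOnto T v : V) = ∑ i, ⟪X i, v⟫ • X i := by
    intro v
    have := b.orthogonalProjectionOnto_apply_eq_sum v
    have := congrArg (Subtype.val : T → V) this
    simpa [b, OrthonormalBasis.coe_mk, X'] using this
  have horth : ∀ i, ⟪H, X i⟫ = 0 := fun i =>
    real_inner_comm H (X i) ▸ (Submodule.mem_orthogonal T H).mp hH (X i) (hXT i)
  have hone : ∀ i : Fin n, ⟪X i, X i⟫ = 1 := by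
    rw [orthonormal_iff_ite] at hX
    intro i; simpa using hX i i
  have hJX : ∀ Y : V, ⟪J Y, Y⟫ = 0 := by
    intro Y
    have h1 := hJskew Y Y
    have h2 : ⟪Y, J Y⟫ = ⟪J Y, Y⟫ := real_inner_comm _ _
    linarith [h1, h2.symm ▸ h1]
  have key : ∀ i, R (X i) H (X i)
      = (-α) • H + ((3 * β) * ⟪J H, X i⟫) • J (X i) := by
    intro i
    rw [hR, hR₁, hR₂, horth i, hone i, hJX (X i)]
    module
  have hsum : (∑ i, R (X i) H (X i))
      = (-(n : ℝ) * α) • H + (3 * β) • J ((Submodule.orthogonalProjectionOnto T (J H) : V)) := by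
    rw [hproj (J H)]
    rw [Finset.sum_congr rfl (fun i _ => key i), Finset.sum_add_distrib,
      Finset.sum_const, map_sum, Finset.smul_sum]
    congr 1
    · simp only [Finset.card_univ, Fintype.card_fin, ← Nat.cast_smul_eq_nsmul ℝ, smul_smul]
      ring_nf
    · apply Finset.sum_congr rfl
      intro i _
      rw [real_inner_comm (X i) (J H), map_smul, smul_smul]
  have hdecomp : J ((Submodule.orthogonalProjectionOnto T (J H) : V)) = j (l H) + k (l H) := by
    rw [hj, hk, hl]
    exact (Submodule.starProjection_add_starProjection_orthogonal (K := T)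
      (J ((Submodule.orthogonalProjectionOnto T (J H) : V)))).symm
  have hjmem : j (l H) ∈ T := by rw [hj]; exact (Submodule.orthogonalProjectionOnto T _).2
  have hkmem : k (l H) ∈ Tᗮ := by rw [hk]; exact (Submodule.orthogonalProjectionOnto Tᗮ _).2
  refine ⟨by rw [hsum, hdecomp], ?_, ?_⟩
  · rw [hsum, hdecomp, map_add, map_smul, map_smul, map_add,
      Submodule.orthogonalProjectionOnto_apply_of_mem_orthogonal hH,
      Submodule.orthogonalProjectionOnto_apply_of_mem_orthogonal hkmem]
    simp [(show (Submodule.orthogonalProjectionOnto T (j (l H)) : V) = j (l H) from Submodule.starProjection_eq_self_iff.mpr hjmem)]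
  · have hjmem' : j (l H) ∈ Tᗮᗮ := Submodule.le_orthogonal_orthogonal T hjmem
    rw [hsum, hdecomp, map_add, map_smul, map_smul, map_add,
      Submodule.orthogonalProjectionOnto_apply_of_mem_orthogonal hjmem']
    simp [(show (Submodule.orthogonalProjectionOnto Tᗮ H : V) = H from Submodule.starProjection_eq_self_iff.mpr hH), (show (Submodule.orthogonalProjectionOnto Tᗮ (k (l H)) : V) = k (l H) from Submodule.starProjection_eq_self_iff.mpr hkmem)]
end

section
/- For every H ∈ T⊥ one has ∑_{i=1}^{n} R₃⋆(Xᵢ, H)Xᵢ = 3φ(tH) = 3(P(tH) + N(tH)), where tH is the orthogonal projection of φH onto T, P(tH) the orthogonal projection of φ(tH) onto T, and N(tH) the orthogonal projection of φ(tH) onto T⊥. -/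
open RealInnerProductSpace

theorem stmt_14
    {V : Type*} [NormedAddCommGroup V] [InnerProductSpace ℝ V] [FiniteDimensional ℝ V]
    (ξ : V) (hξ : ‖ξ‖ = 1)
    (η : V → ℝ) (hη : ∀ X : V, η X = ⟪X, ξ⟫)
    (φ : V →ₗ[ℝ] V)
    (hφ2 : ∀ X : V, φ (φ X) = -X + η X • ξ)
    (hφskew : ∀ X Y : V, ⟪φ X, Y⟫ = -⟪X, φ Y⟫)
    (T : Submodule ℝ V)
    (P N t s : V → V)
    (hP : ∀ X : V, P X = (T.orthogonalProjectionOnto (φ X) : V))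
    (hN : ∀ X : V, N X = (Tᗮ.orthogonalProjectionOnto (φ X) : V))
    (ht : ∀ ν : V, t ν = (T.orthogonalProjectionOnto (φ ν) : V))
    (hs : ∀ ν : V, s ν = (Tᗮ.orthogonalProjectionOnto (φ ν) : V))
    (n : ℕ) (X : Fin n → V)
    (hX : Orthonormal ℝ X)
    (hspan : Submodule.span ℝ (Set.range X) = T)
    (Ω : V → V → ℝ) (hΩ : ∀ A B : V, Ω A B = ⟪A, φ B⟫)
    (R₃s : V → V → V → V)
    (hR₃s : ∀ A B C : V, R₃s A B C = Ω C B • φ A - Ω C A • φ B + (2 * Ω A B) • φ C)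
    : ∀ H ∈ Tᗮ,
      (∑ i, R₃s (X i) H (X i)) = (3 : ℝ) • φ (t H) ∧
      (∑ i, R₃s (X i) H (X i)) = (3 : ℝ) • (P (t H) + N (t H)) := by
  -- X i ∈ T
  have hXT : ∀ i, X i ∈ T := fun i => hspan ▸ Submodule.subset_span (Set.mem_range_self i)
  -- build an orthonormal basis of T
  let Y : Fin n → T := fun i => ⟨X i, hXT i⟩
  have hY : Orthonormal ℝ Y := by
    rw [orthonormal_iff_ite] at hX ⊢
    intro i j
    simpa [Y] using hX i j
  have hYspan : ⊤ ≤ Submodule.span ℝ (Set.range Y) := by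
    intro x _
    have hx : (x : V) ∈ Submodule.span ℝ (Set.range X) := by rw [hspan]; exact x.2
    have : Set.range X = (T.subtype) '' (Set.range Y) := by
      ext v; constructor
      · rintro ⟨i, rfl⟩; exact ⟨Y i, ⟨i, rfl⟩, rfl⟩
      · rintro ⟨y, ⟨i, rfl⟩, rfl⟩; exact ⟨i, rfl⟩
    rw [this, ← Submodule.map_span] at hx
    obtain ⟨y, hy, hyx⟩ := hx
    have : y = x := Subtype.ext hyx
    rwa [← this]
  let B : OrthonormalBasis (Fin n) ℝ T := OrthonormalBasis.mk hY hYspan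
  have hB : ∀ i, (B i : V) = X i := fun i => by
    rw [OrthonormalBasis.coe_mk]
  -- projection formula
  have hproj : ∀ v : V, (T.orthogonalProjectionOnto v : V) = ∑ i, ⟪X i, v⟫ • X i := by
    intro v
    rw [B.orthogonalProjectionOnto_apply_eq_sum v]
    push_cast
    exact Finset.sum_congr rfl fun i _ => by rw [hB]
  intro H _
  -- Ω (X i) (X i) = 0
  have hΩ0 : ∀ A : V, Ω A A = 0 := by
    intro A
    have := hφskew A A
    rw [real_inner_comm] at this
    have h2 : (2 : ℝ) * ⟪A, φ A⟫ = 0 := by linarith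
    rw [hΩ]
    linarith
  have key : (∑ i, R₃s (X i) H (X i)) = (3 : ℝ) • φ (t H) := by
    have : ∀ i, R₃s (X i) H (X i) = (3 : ℝ) • (⟪X i, φ H⟫ • φ (X i)) := by
      intro i
      rw [hR₃s, hΩ0, hΩ]
      module
    rw [Finset.sum_congr rfl fun i _ => this i, ← Finset.smul_sum]
    congr 1
    rw [ht, hproj]
    rw [map_sum]
    exact Finset.sum_congr rfl fun i _ => by rw [map_smul]
  refine ⟨key, key.trans ?_⟩
  congr 1
  rw [hP, hN]
  simpa only [Submodule.starProjection_apply] using (T.starProjection_add_starProjection_orthogonal (φ (t H))).symm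
end

section
/- Let f₁, f₂, f₃ ∈ ℝ and define R⋆ = f₁R₁⋆ + f₂R₂⋆ + f₃R₃⋆. Then for every H ∈ T⊥ one has ∑_{i=1}^{n} R⋆(Xᵢ, H)Xᵢ = -nf₁H + f₂(|ξ⊤|²H - η(H)ξ⊤ + nη(H)ξ) + 3f₃(P(tH) + N(tH)). -/
open RealInnerProductSpace

theorem stmt_15
    {V : Type*} [NormedAddCommGroup V] [InnerProductSpace ℝ V] [FiniteDimensional ℝ V]
    (ξ : V) (hξ : ‖ξ‖ = 1)
    (η : V → ℝ) (hη : ∀ X : V, η X = ⟪X, ξ⟫)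
    (φ : V →ₗ[ℝ] V)
    (hφ2 : ∀ X : V, φ (φ X) = -X + η X • ξ)
    (hφskew : ∀ X Y : V, ⟪φ X, Y⟫ = -⟪X, φ Y⟫)
    (T : Submodule ℝ V)
    (P N t s : V → V)
    (hP : ∀ X : V, P X = (T.orthogonalProjectionOnto (φ X) : V))
    (hN : ∀ X : V, N X = (Tᗮ.orthogonalProjectionOnto (φ X) : V))
    (ht : ∀ ν : V, t ν = (T.orthogonalProjectionOnto (φ ν) : V))
    (hs : ∀ ν : V, s ν = (Tᗮ.orthogonalProjectionOnto (φ ν) : V))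
    (n : ℕ) (X : Fin n → V)
    (hX : Orthonormal ℝ X)
    (hspan : Submodule.span ℝ (Set.range X) = T)
    (Ω : V → V → ℝ) (hΩ : ∀ A B : V, Ω A B = ⟪A, φ B⟫)
    (R₁s : V → V → V → V)
    (hR₁s : ∀ A B C : V, R₁s A B C = ⟪B, C⟫ • A - ⟪A, C⟫ • B)
    (R₂s : V → V → V → V)
    (hR₂s : ∀ A B C : V,
      R₂s A B C = (η A * η C) • B - (η B * η C) • A + (⟪A, C⟫ * η B) • ξ - (⟪B, C⟫ * η A) • ξ)
    (R₃s : V → V → V → V)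
    (hR₃s : ∀ A B C : V, R₃s A B C = Ω C B • φ A - Ω C A • φ B + (2 * Ω A B) • φ C)
    (f₁ f₂ f₃ : ℝ) (Rs : V → V → V → V)
    (hRs : ∀ A B C : V, Rs A B C = f₁ • R₁s A B C + f₂ • R₂s A B C + f₃ • R₃s A B C)
    : ∀ H ∈ Tᗮ,
      ∑ i, Rs (X i) H (X i) =
        (-(n : ℝ) * f₁) • H
          + f₂ • (‖(T.orthogonalProjectionOnto ξ : V)‖ ^ 2 • H
              - η H • (T.orthogonalProjectionOnto ξ : V) + ((n : ℝ) * η H) • ξ)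
          + (3 * f₃) • (P (t H) + N (t H)) := by
  intro H hH
  have hXiT : ∀ i, X i ∈ T := fun i => hspan ▸ Submodule.subset_span ⟨i, rfl⟩
  have hHX : ∀ i, ⟪X i, H⟫ = (0:ℝ) := fun i =>
    (Submodule.mem_orthogonal T H).mp hH _ (hXiT i)
  have hij : ∀ i j, ⟪X i, X j⟫ = if i = j then (1:ℝ) else 0 := orthonormal_iff_ite.mp hX
  have hXX : ∀ i, ⟪X i, X i⟫ = (1:ℝ) := fun i => by simp [hij, hX.1 i]
  have key : ∀ v ∈ T, ∑ i, ⟪X i, v⟫ • X i = v := by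
    intro v hv
    rw [← hspan] at hv
    induction hv using Submodule.span_induction with
    | mem x hx =>
      obtain ⟨j, rfl⟩ := hx
      simp [hij, real_inner_comm]
    | zero => simp
    | add x y _ _ hx hy =>
      simp only [inner_add_right, add_smul, Finset.sum_add_distrib, hx, hy]
    | smul a x _ hx =>
      simp only [inner_smul_right, mul_smul, ← Finset.smul_sum, hx]
  have proj_inner : ∀ (w : V) (i : Fin n), ⟪X i, w⟫ = ⟪X i, (T.orthogonalProjectionOnto w : V)⟫ := by
    intro w i
    have h := Submodule.sub_starProjection_mem_orthogonal (K := T) w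
    have h0 : ⟪X i, w - (T.orthogonalProjectionOnto w : V)⟫ = (0:ℝ) :=
      (Submodule.mem_orthogonal T _).mp h _ (hXiT i)
    rw [inner_sub_right] at h0; linarith
  have projrep : ∀ w : V, ∑ i, ⟪X i, w⟫ • X i = (T.orthogonalProjectionOnto w : V) := by
    intro w
    calc ∑ i, ⟪X i, w⟫ • X i
        = ∑ i, ⟪X i, (T.orthogonalProjectionOnto w : V)⟫ • X i := by
          exact Finset.sum_congr rfl fun i _ => by rw [proj_inner]
      _ = _ := key _ (Submodule.coe_mem _)
  have hnormp : ∑ i, ⟪X i, ξ⟫ * ⟪X i, ξ⟫ = ‖(T.orthogonalProjectionOnto ξ : V)‖ ^ 2 := by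
    set p : V := (T.orthogonalProjectionOnto ξ : V) with hp
    have h1 : ⟪p, p⟫ = ∑ i, ⟪X i, ξ⟫ * ⟪X i, p⟫ := by
      conv_lhs => rw [hp, ← projrep ξ]
      rw [sum_inner]
      simp only [real_inner_smul_left]
      rw [show (∑ i, ⟪X i, ξ⟫ • X i) = p from (projrep ξ).trans hp.symm]
    rw [real_inner_self_eq_norm_sq] at h1
    have h2 : ∑ i, ⟪X i, ξ⟫ * ⟪X i, p⟫ = ∑ i, ⟪X i, ξ⟫ * ⟪X i, ξ⟫ :=
      Finset.sum_congr rfl fun i _ => by rw [hp, ← proj_inner ξ i]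
    rw [h2] at h1
    linarith
  have hΩ0 : ∀ i, Ω (X i) (X i) = 0 := by
    intro i
    have h1 := hφskew (X i) (X i)
    rw [real_inner_comm] at h1
    rw [hΩ]; linarith
  have hphit : φ (t H) = P (t H) + N (t H) := by
    rw [hP, hN]
    exact (Submodule.starProjection_add_starProjection_orthogonal (K := T) (φ (t H))).symm
  have hsum3 : ∑ i, ⟪X i, φ H⟫ • φ (X i) = φ (t H) := by
    have : ∑ i, ⟪X i, φ H⟫ • φ (X i) = φ (∑ i, ⟪X i, φ H⟫ • X i) := by
      rw [map_sum]; simp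
    rw [this, projrep, ← ht]
  have main : ∀ i, Rs (X i) H (X i) =
      f₁ • (-H)
        + f₂ • ((⟪X i, ξ⟫ * ⟪X i, ξ⟫) • H - (⟪H, ξ⟫ * ⟪X i, ξ⟫) • X i + ⟪H, ξ⟫ • ξ)
        + f₃ • ((3:ℝ) • (⟪X i, φ H⟫ • φ (X i))) := by
    intro i
    have hHX' : ⟪H, X i⟫ = (0:ℝ) := by rw [real_inner_comm]; exact hHX i
    rw [hRs, hR₁s, hR₂s, hR₃s, hΩ0 i]
    simp only [hη, hΩ, hHX i, hHX', hXX i]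
    module
  rw [Finset.sum_congr rfl fun i _ => main i]
  rw [Finset.sum_add_distrib, Finset.sum_add_distrib]
  have S1 : ∑ _i : Fin n, f₁ • (-H) = (-(n:ℝ) * f₁) • H := by
    simp [Finset.sum_const, Finset.card_fin]
    module
  have S2 : ∑ i, f₂ • ((⟪X i, ξ⟫ * ⟪X i, ξ⟫) • H - (⟪H, ξ⟫ * ⟪X i, ξ⟫) • X i + ⟪H, ξ⟫ • ξ)
      = f₂ • (‖(T.orthogonalProjectionOnto ξ : V)‖ ^ 2 • H - η H • (T.orthogonalProjectionOnto ξ : V) + ((n:ℝ) * η H) • ξ) := by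
    rw [← Finset.smul_sum]
    congr 1
    rw [Finset.sum_add_distrib, Finset.sum_sub_distrib]
    have e1 : ∑ i, (⟪X i, ξ⟫ * ⟪X i, ξ⟫) • H = ‖(T.orthogonalProjectionOnto ξ : V)‖ ^ 2 • H := by
      rw [← Finset.sum_smul, hnormp]
    have e2 : ∑ i, (⟪H, ξ⟫ * ⟪X i, ξ⟫) • X i = η H • (T.orthogonalProjectionOnto ξ : V) := by
      simp_rw [mul_smul, ← Finset.smul_sum, projrep ξ, hη]
    have e3 : ∑ _i : Fin n, (⟪H, ξ⟫ : ℝ) • ξ = ((n:ℝ) * η H) • ξ := by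
      simp [Finset.sum_const, Finset.card_fin, hη]
      module
    rw [e1, e2, e3]
  have S3 : ∑ i, f₃ • ((3:ℝ) • (⟪X i, φ H⟫ • φ (X i))) = (3 * f₃) • (P (t H) + N (t H)) := by
    rw [← Finset.smul_sum, ← Finset.smul_sum, hsum3, hphit]
    module
  rw [S1, S2, S3]
end
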